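/- Under the string partition setup with words W'_i = S[Ω(i), PSA[i]-1] · #_i, let l = k+1 and m = n+l. Then the suffix array and document array of the collection W' satisfy: for 0 ≤ i < l, SA(W)[i] = |W'_i| - 1 and DA(W)[i] = i; and for l ≤ i < m, SA(W)[i] = position(SA(S)[i-l]) and DA(W)[i] = word(SA(S)[i-l]). -/

import Mathlib

/-- Suffix of the extended string `S` (length `n`, sentinel `S n = 0`) starting at `i`,
as a list of characters. -/
def sfx (S : ℕ → ℕ) (n i : ℕ) : List ℕ :=
  (List.range (n + 1 - i)).map (fun t => S (i + t))

/-- `S` is a string of length `n` over a positive alphabet with the unique smallest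
sentinel `0` appended at position `n`. -/
def Sentinel (S : ℕ → ℕ) (n : ℕ) : Prop :=
  S n = 0 ∧ ∀ i < n, 0 < S i

/-- `SA` is the suffix array of `S` on positions `0..n`: a bijection of `{0,…,n}`
listing the suffixes in strictly increasing lexicographic order. -/
def IsSuffixArray (S : ℕ → ℕ) (n : ℕ) (SA : ℕ → ℕ) : Prop :=
  Set.BijOn SA (Set.Iic n) (Set.Iic n) ∧
  ∀ i j : ℕ, i ≤ n → j ≤ n → i < j →
    List.Lex (· < ·) (sfx S n (SA i)) (sfx S n (SA j))

/-- `Ω(j) = max({-1} ∪ {t ∈ PSA : t ≤ PSA[j]-1})`, where `PSA = SA[0..k]`. -/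
def Omega (SA : ℕ → ℕ) (k j : ℕ) : ℤ :=
  (insert (-1 : ℤ)
    (((Finset.range (k+1)).filter (fun t => SA t < SA j)).image
      (fun t => (SA t : ℤ)))).max' (Finset.insert_nonempty _ _)

/-- Character of `S` at an integer position: positions `-1` and `n` carry the
sentinel `0` (written `$`), characters of `Σ` are positive. -/
def Sc (S : ℕ → ℕ) (n : ℕ) (q : ℤ) : ℤ :=
  if 0 ≤ q ∧ q < n then (S q.toNat : ℤ) else 0

/-- `BWT(S)[i] = S[SA[i]-1]` with `S[-1] = $`. -/
def bwtS (S : ℕ → ℕ) (n : ℕ) (SA : ℕ → ℕ) (i : ℕ) : ℤ :=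
  Sc S n ((SA i : ℤ) - 1)

/-- The word `W_j = S[Ω(j) .. PSA[j]-1]` as a list of characters. -/
def wordList (S : ℕ → ℕ) (n : ℕ) (SA : ℕ → ℕ) (k j : ℕ) : List ℤ :=
  (List.range ((SA j : ℤ) - Omega SA k j).toNat).map
    (fun t => Sc S n (Omega SA k j + t))

/-- The marked word `W'_j = W_j · #_j`, where the distinct markers are encoded as
`#_j = j - (k+1)`, so that `#_0 < … < #_k < $ = 0 < Σ`. -/
def wordM (S : ℕ → ℕ) (n : ℕ) (SA : ℕ → ℕ) (k j : ℕ) : List ℤ :=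
  wordList S n SA k j ++ [(j : ℤ) - (k + 1)]

/-- A position `q ∈ {0,…,n}` of `S` viewed in `{-1,…,n-1}`: position `n` is
identified with `-1` (first right rotation). -/
def posZ (n q : ℕ) : ℤ := if q = n then -1 else (q : ℤ)

/-- `SAW`/`DAW` form the (suffix array, document array) pair for the collection
`Wc 0, …, Wc (l-1)`: the `i`-th lexicographically smallest of the `m` suffixes of
the collection is `(Wc (DAW i)).drop (SAW i)`. -/
def IsMSA (Wc : ℕ → List ℤ) (l m : ℕ) (SAW DAW : ℕ → ℕ) : Prop :=
  (∀ i < m, DAW i < l ∧ SAW i < (Wc (DAW i)).length) ∧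
  (∀ j < l, ∀ p < (Wc j).length, ∃! i, i < m ∧ DAW i = j ∧ SAW i = p) ∧
  ∀ i j : ℕ, i < m → j < m → i < j →
    List.Lex (· < ·) ((Wc (DAW i)).drop (SAW i)) ((Wc (DAW j)).drop (SAW j))

/-- Multi-string BWT: the character cyclically preceding the `i`-th smallest
suffix within its word. -/
def bwtW (Wc : ℕ → List ℤ) (SAW DAW : ℕ → ℕ) (i : ℕ) : ℤ :=
  (Wc (DAW i)).getD ((SAW i + (Wc (DAW i)).length - 1) % (Wc (DAW i)).length) 0


/-! ### Auxiliary lemmas -/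

section MyAux
variable {α : Type*} [LinearOrder α]

lemma my_lex_of_get : ∀ (c : ℕ) (u v : List α) (hu : c < u.length) (hv : c < v.length),
    (∀ t (h1 : t < u.length) (h2 : t < v.length), t < c → u[t] = v[t]) →
    u[c]'hu < v[c]'hv → List.Lex (· < ·) u v := by
  intro c
  induction c with
  | zero =>
    intro u v hu hv _ hlt
    cases u with
    | nil => simp at hu
    | cons x u' =>
      cases v with
      | nil => simp at hv
      | cons y v' => exact List.Lex.rel (by simpa using hlt)
  | succ c ih =>
    intro u v hu hv heq hlt
    cases u with
    | nil => simp at hu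
    | cons x u' =>
      cases v with
      | nil => simp at hv
      | cons y v' =>
        have hxy : x = y := heq 0 (by simp) (by simp) (Nat.succ_pos c)
        subst hxy
        refine List.Lex.cons (ih u' v' (by simpa using hu) (by simpa using hv) ?_
          (by simpa using hlt))
        intro t h1 h2 ht
        exact heq (t+1) (by simpa using Nat.succ_lt_succ h1)
          (by simpa using Nat.succ_lt_succ h2) (by omega)

lemma my_lex_elim {u v : List α} (h : List.Lex (· < ·) u v) :
    (∃ c, ∃ (hu : c < u.length) (hv : c < v.length),
      (∀ t (h1 : t < u.length) (h2 : t < v.length), t < c → u[t] = v[t]) ∧ u[c]'hu < v[c]'hv) ∨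
    (u.length < v.length ∧ ∀ t (h1 : t < u.length) (h2 : t < v.length), u[t] = v[t]) := by
  induction h with
  | nil =>
    right
    refine ⟨by simp, ?_⟩
    intro t h1 h2; simp at h1
  | @rel a l1 b l2 hab =>
    left
    exact ⟨0, by simp, by simp, fun t _ _ ht => by omega, by simpa using hab⟩
  | @cons a l1 l2 h ih =>
    rcases ih with ⟨c, hu, hv, heq, hlt⟩ | ⟨hlen, heq⟩
    · left
      refine ⟨c+1, by simpa using Nat.succ_lt_succ hu, by simpa using Nat.succ_lt_succ hv, ?_,
        by simpa using hlt⟩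
      intro t h1 h2 ht
      cases t with
      | zero => simp
      | succ s => simpa using heq s (by simpa using h1) (by simpa using h2) (by omega)
    · right
      refine ⟨by simpa using Nat.succ_lt_succ hlen, ?_⟩
      intro t h1 h2
      cases t with
      | zero => simp
      | succ s => simpa using heq s (by simpa using h1) (by simpa using h2)

end MyAux

lemma my_drop_map_range {β : Type*} (f : ℕ → β) (N p : ℕ) :
    ((List.range N).map f).drop p = (List.range (N - p)).map (fun t => f (p + t)) := by
  apply List.ext_getElem
  · simp
  · intro i h1 h2
    simp

def myCyc (n a t : ℕ) : ℕ := if a = n then (if t = 0 then n else t - 1) else a + t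

def myWlen (n e a : ℕ) : ℕ := if a = n then e + 1 else e - a

def myCsfx (S : ℕ → ℕ) (n k j a e : ℕ) : List ℤ :=
  (List.range (myWlen n e a)).map (fun t => ((S (myCyc n a t) : ℕ) : ℤ)) ++ [(j:ℤ) - (k+1)]

lemma myCsfx_length (S : ℕ → ℕ) (n k j a e : ℕ) :
    (myCsfx S n k j a e).length = myWlen n e a + 1 := by simp [myCsfx]

lemma myCsfx_get (S : ℕ → ℕ) (n k j a e : ℕ) {t : ℕ} (h : t < (myCsfx S n k j a e).length) :
    (myCsfx S n k j a e)[t]'h =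
      if t < myWlen n e a then ((S (myCyc n a t) : ℕ) : ℤ) else (j:ℤ) - (k+1) := by
  rw [myCsfx_length] at h
  simp only [myCsfx]
  split
  · rename_i ht
    rw [List.getElem_append_left (by simpa using ht)]
    simp
  · rename_i ht
    have : t = myWlen n e a := by omega
    subst this
    rw [List.getElem_append_right (by simp)]
    simp

lemma sfx_length (S : ℕ → ℕ) (n a : ℕ) : (sfx S n a).length = n + 1 - a := by simp [sfx]

lemma sfx_get (S : ℕ → ℕ) (n a : ℕ) {t : ℕ} (h : t < (sfx S n a).length) :
    (sfx S n a)[t]'h = S (a + t) := by simp [sfx]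

lemma wordList_eq (S SA : ℕ → ℕ) (n k j : ℕ) :
    wordList S n SA k j = (List.range ((SA j : ℤ) - Omega SA k j).toNat).map
      (fun t : ℕ => Sc S n (Omega SA k j + (t : ℤ))) := by
  unfold wordList
  simp only [List.pure_def, List.bind_eq_flatMap, List.map_flatMap, List.flatMap_singleton,
    List.map_singleton]
  exact (List.map_eq_flatMap).symm

lemma wordM_length (S SA : ℕ → ℕ) (n k j : ℕ) :
    (wordM S n SA k j).length = ((SA j : ℤ) - Omega SA k j).toNat + 1 := by
  rw [wordM, wordList_eq]
  simp

section Main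

variable {S SA : ℕ → ℕ} {n k : ℕ}

lemma my_neg_one_le_omega (j : ℕ) : -1 ≤ Omega SA k j :=
  Finset.le_max' _ _ (Finset.mem_insert_self _ _)

lemma my_omega_lt_sa (j : ℕ) : Omega SA k j < (SA j : ℤ) := by
  rw [Omega, Finset.max'_lt_iff]
  intro b hb
  rcases Finset.mem_insert.mp hb with h | h
  · subst h; omega
  · obtain ⟨t, ht, rfl⟩ := Finset.mem_image.mp h
    exact_mod_cast (Finset.mem_filter.mp ht).2

lemma my_le_omega {t j : ℕ} (ht : t ≤ k) (h : SA t < SA j) : (SA t : ℤ) ≤ Omega SA k j := by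
  apply Finset.le_max'
  rw [Finset.mem_insert]
  right
  rw [Finset.mem_image]
  refine ⟨t, ?_, rfl⟩
  rw [Finset.mem_filter, Finset.mem_range]
  exact ⟨by omega, h⟩

lemma my_omega_le {j : ℕ} {q : ℤ} (h1 : -1 ≤ q)
    (h2 : ∀ t, t ≤ k → SA t < SA j → (SA t : ℤ) ≤ q) : Omega SA k j ≤ q := by
  apply Finset.max'_le
  intro b hb
  rcases Finset.mem_insert.mp hb with h | h
  · omega
  · obtain ⟨t, ht, rfl⟩ := Finset.mem_image.mp h
    rw [Finset.mem_filter, Finset.mem_range] at ht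
    exact h2 t (by omega) ht.2

lemma my_posZ_lt {a : ℕ} (ha : a ≤ n) : posZ n a < (n : ℤ) := by
  unfold posZ; split <;> omega

lemma my_neg_one_le_posZ (a : ℕ) : -1 ≤ posZ n a := by
  unfold posZ; split <;> omega

lemma my_SA_le (hSA : IsSuffixArray S n SA) {j : ℕ} (hj : j ≤ n) : SA j ≤ n :=
  hSA.1.1 hj

lemma my_rank (hSA : IsSuffixArray S n SA) {a : ℕ} (ha : a ≤ n) :
    ∃ r, r ≤ n ∧ SA r = a := by
  obtain ⟨r, hr, hra⟩ := hSA.1.2.2 (show a ∈ Set.Iic n from ha)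
  exact ⟨r, hr, hra⟩

lemma my_rank_lt (hSA : IsSuffixArray S n SA) {r j : ℕ} (hr : r ≤ n) (hj : j ≤ n)
    (h : List.Lex (· < ·) (sfx S n (SA r)) (sfx S n (SA j))) : r < j := by
  by_contra hc
  push_neg at hc
  rcases eq_or_lt_of_le hc with h' | h'
  · subst h'; exact asymm h h
  · exact asymm h (hSA.2 j r hj hr h')

lemma my_sfx_n (hS : Sentinel S n) : sfx S n n = [0] := by
  unfold sfx
  rw [show n + 1 - n = 1 by omega]
  simp [List.range_succ, hS.1]

lemma my_not_lex_sfx_n (hS : Sentinel S n) {a : ℕ} (ha : a ≤ n) :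
    ¬ List.Lex (· < ·) (sfx S n a) (sfx S n n) := by
  intro h
  rw [my_sfx_n hS] at h
  rcases my_lex_elim h with ⟨c, hu, hv, heq, hlt⟩ | ⟨hlen, heq⟩
  · have hc : c = 0 := by simpa [Nat.lt_one_iff] using hv
    subst hc
    simp only [List.getElem_singleton] at hlt
    omega
  · rw [sfx_length] at hlen
    simp only [List.length_singleton] at hlen
    omega

lemma my_SA_zero (hS : Sentinel S n) (hSA : IsSuffixArray S n SA) : SA 0 = n := by
  obtain ⟨r, hrn, hr⟩ := my_rank hSA (le_refl n)
  by_cases h0 : r = 0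
  · rwa [h0] at hr
  · exfalso
    have := hSA.2 0 r (Nat.zero_le n) hrn (by omega)
    rw [hr] at this
    exact my_not_lex_sfx_n hS (my_SA_le hSA (Nat.zero_le n)) this

lemma my_word_exists (hS : Sentinel S n) (hSA : IsSuffixArray S n SA) (hk : k < n)
    {a : ℕ} (ha : a ≤ n) :
    ∃ j, j ≤ k ∧ Omega SA k j ≤ posZ n a ∧ posZ n a < (SA j : ℤ) := by
  set T := (Finset.range (k+1)).filter (fun t => posZ n a < (SA t : ℤ)) with hT
  have hT0 : 0 ∈ T := by
    rw [hT, Finset.mem_filter, Finset.mem_range]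
    refine ⟨by omega, ?_⟩
    rw [my_SA_zero hS hSA]
    exact my_posZ_lt ha
  obtain ⟨j, hjT, hjmin⟩ := Finset.exists_min_image T SA ⟨0, hT0⟩
  rw [hT, Finset.mem_filter, Finset.mem_range] at hjT
  refine ⟨j, by omega, ?_, hjT.2⟩
  apply my_omega_le (my_neg_one_le_posZ a)
  intro t htk hlt
  by_contra hc
  push_neg at hc
  have htT : t ∈ T := by
    rw [hT, Finset.mem_filter, Finset.mem_range]
    exact ⟨by omega, hc⟩
  have := hjmin t htT
  omega

lemma my_word_unique (hSA : IsSuffixArray S n SA) (hk : k < n) {q : ℤ} {j1 j2 : ℕ}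
    (h1 : j1 ≤ k) (h2 : j2 ≤ k)
    (hq1 : Omega SA k j1 ≤ q) (hq2 : q < (SA j1 : ℤ))
    (hq3 : Omega SA k j2 ≤ q) (hq4 : q < (SA j2 : ℤ)) : j1 = j2 := by
  rcases lt_trichotomy (SA j1) (SA j2) with h | h | h
  · have := my_le_omega h1 h
    omega
  · exact hSA.1.2.1 (show j1 ∈ Set.Iic n by simp; omega) (show j2 ∈ Set.Iic n by simp; omega) h
  · have := my_le_omega h2 h
    omega

lemma my_drop_wordM_last (S : ℕ → ℕ) (n : ℕ) (j : ℕ) :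
    (wordM S n SA k j).drop ((wordM S n SA k j).length - 1) = [(j:ℤ) - (k+1)] := by
  rw [wordM]
  have h1 : (wordM S n SA k j).length - 1 = (wordList S n SA k j).length := by
    rw [wordM]
    simp
  rw [wordM] at h1
  rw [h1, List.drop_left]

lemma my_drop_wordM (hS : Sentinel S n) (hSA : IsSuffixArray S n SA) (hk : k < n)
    {j a : ℕ} (hj : j ≤ k) (ha : a ≤ n)
    (h1 : Omega SA k j ≤ posZ n a) (h2 : posZ n a < (SA j : ℤ)) :
    (wordM S n SA k j).drop ((posZ n a - Omega SA k j).toNat) = myCsfx S n k j a (SA j) := by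
  have hSAj : SA j ≤ n := my_SA_le hSA (by omega)
  have hΩ1 : -1 ≤ Omega SA k j := my_neg_one_le_omega j
  have hΩ2 : Omega SA k j < (SA j : ℤ) := my_omega_lt_sa j
  set Om := Omega SA k j with hOm
  set p := (posZ n a - Om).toNat with hp
  set Lj := ((SA j : ℤ) - Om).toNat with hLj
  have hpL : p ≤ Lj := by omega
  have hwl : (wordList S n SA k j).length = Lj := by rw [wordList_eq]; simp; rfl
  rw [wordM, List.drop_append_of_le_length (by omega), wordList_eq, ← hOm, ← hLj,
    my_drop_map_range]
  unfold myCsfx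
  congr 1
  have hlen : Lj - p = myWlen n (SA j) a := by
    unfold myWlen
    by_cases han : a = n
    · rw [if_pos han]
      have : posZ n a = -1 := by rw [posZ, if_pos han]
      omega
    · rw [if_neg han]
      have : posZ n a = (a : ℤ) := by rw [posZ, if_neg han]
      omega
  rw [hlen]
  apply List.map_congr_left
  intro t ht
  rw [List.mem_range] at ht
  by_cases han : a = n
  · have hpz : posZ n a = -1 := by rw [posZ, if_pos han]
    have hOme : Om = -1 := by omega
    have hp0 : p = 0 := by omega
    have hwn : myWlen n (SA j) a = SA j + 1 := by rw [myWlen, if_pos han]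
    rw [hwn] at ht
    cases t with
    | zero =>
      have hd : Om + ((p + 0 : ℕ) : ℤ) = -1 := by push_cast; omega
      rw [hd, myCyc, if_pos han, if_pos rfl, hS.1, Sc, if_neg (by omega)]
      simp
    | succ s =>
      rw [hOme, hp0]
      have hd : (-1 : ℤ) + ↑(0 + (s+1)) = ((s : ℕ) : ℤ) := by push_cast; omega
      rw [hd, Sc, if_pos (by constructor <;> omega), myCyc, if_pos han, if_neg (by omega)]
      simp
  · have hpz : posZ n a = (a : ℤ) := by rw [posZ, if_neg han]
    have hwn : myWlen n (SA j) a = SA j - a := by rw [myWlen, if_neg han]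
    rw [hwn] at ht
    have hd : Om + ↑(p + t) = ((a + t : ℕ) : ℤ) := by push_cast; omega
    rw [hd, Sc, if_pos (by constructor <;> [omega; (push_cast; omega)]), myCyc, if_neg han]
    have htn : ((a : ℤ) + (t : ℤ)).toNat = a + t := by omega
    rw [show ((a + t : ℕ) : ℤ).toNat = a + t from by omega]

lemma my_marker_lt_csfx {j j' a e : ℕ} (hj : j ≤ k) (hwlen : 0 < myWlen n e a) :
    List.Lex (· < ·) [(j:ℤ) - (k+1)] (myCsfx S n k j' a e) := by
  apply my_lex_of_get 0 _ _ (by simp) (by rw [myCsfx_length]; omega)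
  · intro t _ _ ht; omega
  · rw [List.getElem_singleton, myCsfx_get, if_pos hwlen]
    omega

lemma my_key (hS : Sentinel S n) (hSA : IsSuffixArray S n SA) (hk : k < n)
    {a b ja jb : ℕ} (hja : ja ≤ k) (hjb : jb ≤ k) (ha : a ≤ n) (hb : b ≤ n)
    (hwa1 : Omega SA k ja ≤ posZ n a) (hwa2 : posZ n a < (SA ja : ℤ))
    (hwb1 : Omega SA k jb ≤ posZ n b) (hwb2 : posZ n b < (SA jb : ℤ))
    (hlex : List.Lex (· < ·) (sfx S n a) (sfx S n b)) :
    List.Lex (· < ·) (myCsfx S n k ja a (SA ja)) (myCsfx S n k jb b (SA jb)) := by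
  have hSAa : SA ja ≤ n := my_SA_le hSA (by omega)
  have hSAb : SA jb ≤ n := my_SA_le hSA (by omega)
  by_cases hbn : b = n
  · exact absurd (hbn ▸ hlex) (my_not_lex_sfx_n hS ha)
  have hbpz : posZ n b = (b:ℤ) := if_neg hbn
  have hbSA : b < SA jb := by rw [hbpz] at hwb2; exact_mod_cast hwb2
  have hbwlen : myWlen n (SA jb) b = SA jb - b := if_neg hbn
  by_cases han : a = n
  · subst han
    apply my_lex_of_get 0 _ _ (by rw [myCsfx_length]; omega) (by rw [myCsfx_length]; omega)
    · intro t _ _ ht; omega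
    · rw [myCsfx_get, myCsfx_get,
        if_pos (show (0:ℕ) < myWlen a (SA ja) a from by rw [myWlen, if_pos rfl]; omega),
        if_pos (by omega)]
      have h1 : myCyc a a 0 = a := by rw [myCyc, if_pos rfl, if_pos rfl]
      have h2 : myCyc a b 0 = b := by rw [myCyc, if_neg hbn]; omega
      rw [h1, h2, hS.1]
      have := hS.2 b (by omega)
      omega
  have hapz : posZ n a = (a:ℤ) := if_neg han
  have haSA : a < SA ja := by rw [hapz] at hwa2; exact_mod_cast hwa2
  have hawlen : myWlen n (SA ja) a = SA ja - a := if_neg han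
  set La := SA ja - a with hLa
  set Lb := SA jb - b with hLb
  have hLa1 : 1 ≤ La := by omega
  have hLb1 : 1 ≤ Lb := by omega
  rcases my_lex_elim hlex with ⟨c, hu, hv, heq, hlt⟩ | ⟨hlen, heq⟩
  · rw [sfx_length] at hu hv
    simp only [sfx_get] at hlt
    have hchar : ∀ t, t < c → S (a + t) = S (b + t) := by
      intro t ht
      have h1 : t < (sfx S n a).length := by rw [sfx_length]; omega
      have h2 : t < (sfx S n b).length := by rw [sfx_length]; omega
      simpa only [sfx_get] using heq t h1 h2 ht
    have hceq : ∀ t (h1 : t < (myCsfx S n k ja a (SA ja)).length)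
        (h2 : t < (myCsfx S n k jb b (SA jb)).length), t < c → t < La → t < Lb →
        (myCsfx S n k ja a (SA ja))[t]'h1 = (myCsfx S n k jb b (SA jb))[t]'h2 := by
      intro t h1 h2 htc ht1 ht2
      rw [myCsfx_get, myCsfx_get, if_pos (by omega), if_pos (by omega)]
      simp only [myCyc]
      rw [if_neg han, if_neg hbn]
      exact_mod_cast hchar t htc
    have htail : ∀ L, 1 ≤ L → L ≤ c →
        List.Lex (· < ·) (sfx S n (a + L)) (sfx S n (b + L)) := by
      intro L hL1 hLc
      apply my_lex_of_get (c - L) _ _ (by rw [sfx_length]; omega) (by rw [sfx_length]; omega)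
      · intro t h1 h2 ht
        simp only [sfx_get]
        rw [show a + L + t = a + (L + t) from by omega,
          show b + L + t = b + (L + t) from by omega]
        exact hchar (L + t) (by omega)
      · simp only [sfx_get]
        rw [show a + L + (c - L) = a + c from by omega,
          show b + L + (c - L) = b + c from by omega]
        exact hlt
    by_cases hcase : c < La ∧ c < Lb
    · apply my_lex_of_get c _ _ (by rw [myCsfx_length]; omega) (by rw [myCsfx_length]; omega)
      · intro t h1 h2 ht
        exact hceq t h1 h2 (by omega) (by omega) (by omega)
      · rw [myCsfx_get, myCsfx_get, if_pos (by omega), if_pos (by omega)]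
        simp only [myCyc]
        rw [if_neg han, if_neg hbn]
        exact_mod_cast hlt
    · have hmain : (La ≤ c ∧ La < Lb) ∨ (La ≤ c ∧ La = Lb) ∨ (Lb ≤ c ∧ Lb < La) := by omega
      rcases hmain with ⟨h1c, h1L⟩ | ⟨h1c, h1L⟩ | ⟨h1c, h1L⟩
      · apply my_lex_of_get La _ _ (by rw [myCsfx_length]; omega) (by rw [myCsfx_length]; omega)
        · intro t hh1 hh2 ht
          exact hceq t hh1 hh2 (by omega) (by omega) (by omega)
        · rw [myCsfx_get, myCsfx_get, if_neg (by omega), if_pos (by omega)]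
          omega
      · have hlex2 := htail La hLa1 h1c
        have hsa : a + La = SA ja := by omega
        have hsb : b + La = SA jb := by omega
        rw [hsa, hsb] at hlex2
        have hjj : ja < jb := my_rank_lt hSA (by omega) (by omega) hlex2
        apply my_lex_of_get La _ _ (by rw [myCsfx_length]; omega) (by rw [myCsfx_length]; omega)
        · intro t hh1 hh2 ht
          exact hceq t hh1 hh2 (by omega) (by omega) (by omega)
        · rw [myCsfx_get, myCsfx_get, if_neg (by omega), if_neg (by omega)]
          push_cast
          omega
      · exfalso
        have hlex3 := htail Lb hLb1 h1c
        have hsb : b + Lb = SA jb := by omega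
        rw [hsb] at hlex3
        obtain ⟨r, hrn, hra⟩ := my_rank hSA (show a + Lb ≤ n from by omega)
        rw [← hra] at hlex3
        have hrj : r < jb := my_rank_lt hSA hrn (by omega) hlex3
        have hOm := my_le_omega (show r ≤ k from by omega) (show SA r < SA ja from by omega)
        rw [hapz] at hwa1
        omega
  · exfalso
    rw [sfx_length, sfx_length] at hlen
    have hba : b < a := by omega
    have h1 : n - a < (sfx S n a).length := by rw [sfx_length]; omega
    have h2 : n - a < (sfx S n b).length := by rw [sfx_length]; omega
    have h3 := heq (n - a) h1 h2
    simp only [sfx_get] at h3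
    rw [show a + (n - a) = n from by omega, hS.1] at h3
    have := hS.2 (b + (n - a)) (by omega)
    omega

end Main

/-- the suffix array and document array of the collection
`W' = {W'_0, …, W'_k}` satisfy: for `0 ≤ i < l`, `SA(W)[i] = |W'_i| - 1` and
`DA(W)[i] = i`; for `l ≤ i < m`, `SA(W)[i] = position(SA(S)[i-l])` and
`DA(W)[i] = word(SA(S)[i-l])`, where `l = k+1` and `m = (n+1) + l`. -/
theorem msa_of_partition (S SA SAW DAW : ℕ → ℕ) (n k : ℕ) (hk : k < n)
    (hS : Sentinel S n) (hSA : IsSuffixArray S n SA)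
    (hMSA : IsMSA (wordM S n SA k) (k+1) (n+1+(k+1)) SAW DAW) :
    (∀ i ≤ k, SAW i = (wordM S n SA k i).length - 1 ∧ DAW i = i) ∧
    (∀ i : ℕ, k + 1 ≤ i → i < n+1+(k+1) →
      DAW i ≤ k ∧
      Omega SA k (DAW i) ≤ posZ n (SA (i - (k+1))) ∧
      posZ n (SA (i - (k+1))) ≤ (SA (DAW i) : ℤ) - 1 ∧
      (SAW i : ℤ) = posZ n (SA (i - (k+1))) - Omega SA k (DAW i)) := by
  classical
  obtain ⟨hval, huniq, hord⟩ := hMSA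
  have hwex0 : ∀ a : ℕ, ∃ j, a ≤ n →
      (j ≤ k ∧ Omega SA k j ≤ posZ n a ∧ posZ n a < (SA j : ℤ)) := by
    intro a
    by_cases h : a ≤ n
    · obtain ⟨j, hj⟩ := my_word_exists hS hSA hk h
      exact ⟨j, fun _ => hj⟩
    · exact ⟨0, fun h' => absurd h' h⟩
  choose w hw using hwex0
  set m := n + 1 + (k + 1) with hm
  set f : ℕ → ℕ × ℕ := fun i =>
    if i ≤ k then (i, (wordM S n SA k i).length - 1)
    else (w (SA (i - (k+1))),
      (posZ n (SA (i - (k+1))) - Omega SA k (w (SA (i - (k+1))))).toNat) with hf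
  have hfval1 : ∀ i, i ≤ k → f i = (i, (wordM S n SA k i).length - 1) := by
    intro i hik; simp only [hf]; rw [if_pos hik]
  have hfval2 : ∀ i, ¬(i ≤ k) → f i = (w (SA (i - (k+1))),
      (posZ n (SA (i - (k+1))) - Omega SA k (w (SA (i - (k+1))))).toNat) := by
    intro i hik; simp only [hf]; rw [if_neg hik]
  have hwM1 : ∀ j : ℕ, 1 ≤ (wordM S n SA k j).length := by
    intro j; rw [wordM_length]; omega
  have hSAle : ∀ i : ℕ, i < m → SA (i - (k+1)) ≤ n := by
    intro i him
    exact my_SA_le hSA (by omega)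
  have hg1 : ∀ i : ℕ, i ≤ k →
      (wordM S n SA k (f i).1).drop ((f i).2) = [(i:ℤ) - (k+1)] := by
    intro i hik
    rw [hfval1 i hik]
    exact my_drop_wordM_last S n i
  have hg2 : ∀ i : ℕ, k + 1 ≤ i → i < m →
      (wordM S n SA k (f i).1).drop ((f i).2) =
        myCsfx S n k (w (SA (i - (k+1)))) (SA (i - (k+1))) (SA (w (SA (i - (k+1))))) := by
    intro i hik him
    have ha := hSAle i him
    obtain ⟨hw1, hw2, hw3⟩ := hw (SA (i - (k+1))) ha
    rw [hfval2 i (by omega)]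
    exact my_drop_wordM hS hSA hk hw1 ha hw2 hw3
  have hvalF : ∀ i : ℕ, i < m → (f i).1 < k + 1 ∧ (f i).2 < (wordM S n SA k (f i).1).length := by
    intro i him
    by_cases hik : i ≤ k
    · rw [hfval1 i hik]
      dsimp only
      exact ⟨by omega, by have := hwM1 i; omega⟩
    · have ha := hSAle i him
      obtain ⟨hw1, hw2, hw3⟩ := hw (SA (i - (k+1))) ha
      rw [hfval2 i hik]
      dsimp only
      refine ⟨by omega, ?_⟩
      rw [wordM_length]
      omega
  have hordF : ∀ i i' : ℕ, i < m → i' < m → i < i' →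
      List.Lex (· < ·) ((wordM S n SA k (f i).1).drop (f i).2)
        ((wordM S n SA k (f i').1).drop (f i').2) := by
    intro i i' him him' hii
    by_cases h1 : i ≤ k
    · by_cases h2 : i' ≤ k
      · rw [hg1 i h1, hg1 i' h2]
        exact List.Lex.rel (by push_cast; omega)
      · rw [hg1 i h1, hg2 i' (by omega) him']
        have ha := hSAle i' him'
        obtain ⟨hw1, hw2, hw3⟩ := hw (SA (i' - (k+1))) ha
        apply my_marker_lt_csfx h1
        by_cases hn : SA (i' - (k+1)) = n
        · rw [myWlen, if_pos hn]; omega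
        · rw [myWlen, if_neg hn]
          have hpz : posZ n (SA (i' - (k+1))) = (SA (i' - (k+1)) : ℤ) := if_neg hn
          omega
    · have h2 : ¬ i' ≤ k := by omega
      have ha := hSAle i him
      have hb := hSAle i' him'
      have hlex := hSA.2 (i - (k+1)) (i' - (k+1)) (by omega) (by omega) (by omega)
      obtain ⟨hwa1, hwa2, hwa3⟩ := hw (SA (i - (k+1))) ha
      obtain ⟨hwb1, hwb2, hwb3⟩ := hw (SA (i' - (k+1))) hb
      rw [hg2 i (by omega) him, hg2 i' (by omega) him']
      exact my_key hS hSA hk hwa1 hwb1 ha hb hwa2 hwa3 hwb2 hwb3 hlex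
  have hsurjF : ∀ j, j < k + 1 → ∀ p, p < (wordM S n SA k j).length →
      ∃ i, i < m ∧ f i = (j, p) := by
    intro j hj p hp
    rw [wordM_length] at hp
    have hSAj : SA j ≤ n := my_SA_le hSA (by omega)
    have hOm1 : -1 ≤ Omega SA k j := my_neg_one_le_omega j
    have hOm2 : Omega SA k j < (SA j : ℤ) := my_omega_lt_sa j
    by_cases hpe : p = ((SA j : ℤ) - Omega SA k j).toNat
    · refine ⟨j, by omega, ?_⟩
      rw [hfval1 j (by omega), wordM_length, hpe]
      norm_num
    · have hpL : p < ((SA j : ℤ) - Omega SA k j).toNat := by omega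
      set q : ℤ := Omega SA k j + (p : ℤ) with hq
      have hq2 : q < (SA j : ℤ) := by omega
      have hq1 : -1 ≤ q := by omega
      set a : ℕ := if q < 0 then n else q.toNat with haq
      have hpz : posZ n a = q ∧ a ≤ n := by
        by_cases h0 : q < 0
        · rw [haq, if_pos h0]
          refine ⟨?_, le_refl n⟩
          rw [posZ, if_pos rfl]
          omega
        · rw [haq, if_neg h0]
          have hqn : q.toNat ≠ n := by omega
          refine ⟨?_, by omega⟩
          rw [posZ, if_neg hqn]
          omega
      obtain ⟨r, hrn, hra⟩ := my_rank hSA hpz.2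
      refine ⟨r + (k+1), by omega, ?_⟩
      rw [hfval2 (r + (k+1)) (by omega)]
      have hsub : r + (k+1) - (k+1) = r := by omega
      rw [hsub, hra]
      obtain ⟨hw1, hw2, hw3⟩ := hw a hpz.2
      have hwj : w a = j :=
        my_word_unique hSA hk hw1 (show j ≤ k from by omega)
          (by rw [← hpz.1]; exact hw2) (by rw [← hpz.1]; exact hw3)
          (by omega) hq2
      rw [hwj, hpz.1]
      have hqp : (q - Omega SA k j).toNat = p := by omega
      rw [hqp]
  have hσex : ∀ i : ℕ, ∃ y : ℕ, i < m →
      ((y < m ∧ DAW y = (f i).1 ∧ SAW y = (f i).2) ∧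
        ∀ z, (z < m ∧ DAW z = (f i).1 ∧ SAW z = (f i).2) → z = y) := by
    intro i
    by_cases him : i < m
    · obtain ⟨y, hy1, hy2⟩ := huniq (f i).1 (hvalF i him).1 (f i).2 (hvalF i him).2
      exact ⟨y, fun _ => ⟨hy1, hy2⟩⟩
    · exact ⟨0, fun h' => absurd h' him⟩
  choose σ hσ using hσex
  have hσm : ∀ i, i < m → σ i < m ∧ DAW (σ i) = (f i).1 ∧ SAW (σ i) = (f i).2 :=
    fun i him => (hσ i him).1
  have hmono : ∀ i i', i < m → i' < m → i < i' → σ i < σ i' := by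
    intro i i' him him' hii
    have hlex := hordF i i' him him' hii
    obtain ⟨h1m, h1d, h1s⟩ := hσm i him
    obtain ⟨h2m, h2d, h2s⟩ := hσm i' him'
    rcases lt_trichotomy (σ i) (σ i') with h | h | h
    · exact h
    · exfalso
      have he : (wordM S n SA k (f i).1).drop (f i).2 =
          (wordM S n SA k (f i').1).drop (f i').2 := by
        rw [← h1d, ← h1s, ← h2d, ← h2s, h]
      rw [he] at hlex
      exact absurd hlex (asymm hlex)
    · exfalso
      have h3 := hord (σ i') (σ i) h2m h1m h
      rw [h1d, h1s, h2d, h2s] at h3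
      exact absurd h3 (asymm hlex)
  have hsurjσ : ∀ y, y < m → ∃ i, i < m ∧ σ i = y := by
    intro y hy
    obtain ⟨hyd, hys⟩ := hval y hy
    obtain ⟨i, him, hfi⟩ := hsurjF (DAW y) hyd (SAW y) hys
    refine ⟨i, him, ?_⟩
    exact ((hσ i him).2 y ⟨hy, by rw [hfi], by rw [hfi]⟩).symm
  have hid : ∀ i, i < m → σ i = i := by
    intro i
    induction i using Nat.strong_induction_on with
    | _ i ih =>
      intro him
      have hge : i ≤ σ i := by
        by_contra hc
        push_neg at hc
        have hσim : σ i < m := (hσm i him).1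
        have h1 : σ (σ i) = σ i := ih (σ i) hc hσim
        have h2 := hmono (σ i) i hσim him hc
        omega
      obtain ⟨i1, hi1m, hi1⟩ := hsurjσ i him
      rcases lt_trichotomy i1 i with h | h | h
      · rw [ih i1 h hi1m] at hi1; omega
      · subst h; exact hi1
      · have := hmono i i1 him hi1m h
        omega
  have hDS : ∀ i, i < m → DAW i = (f i).1 ∧ SAW i = (f i).2 := by
    intro i him
    have h := hσm i him
    rw [hid i him] at h
    exact ⟨h.2.1, h.2.2⟩
  constructor
  · intro i hik
    have him : i < m := by omega
    have hh := hDS i him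
    rw [hfval1 i hik] at hh
    exact ⟨hh.2, hh.1⟩
  · intro i hli him'
    have hik : ¬ i ≤ k := by omega
    have ha := hSAle i him'
    obtain ⟨hw1, hw2, hw3⟩ := hw (SA (i - (k+1))) ha
    have hh := hDS i him'
    rw [hfval2 i hik] at hh
    obtain ⟨hD, hSw⟩ := hh
    have hD' : DAW i = w (SA (i - (k+1))) := hD
    have hSw' : SAW i = (posZ n (SA (i - (k+1))) - Omega SA k (w (SA (i - (k+1))))).toNat := hSw
    rw [hD']
    refine ⟨hw1, hw2, by omega, ?_⟩
    rw [hSw']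
    omega
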